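/- Let a, b, x be vectors in ℝ^n with x ≠ 0, b ≠ 0, ⟨a, b⟩ ≥ 0. Consider min over r of ⟨x, r⟩ subject to ⟨a, r + b⟩ ≤ 0 and ‖r‖₂² ≤ ‖b‖₂². If a = 0, or if a ≠ 0 and ⟨b,a⟩/‖b‖₂ ≤ ⟨x,a⟩/‖x‖₂, the minimum value is -‖x‖₂‖b‖₂; otherwise (a ≠ 0 and ⟨b,a⟩/‖b‖₂ > ⟨x,a⟩/‖x‖₂) the minimum value is -‖x^⊥‖₂ √(‖b‖₂² - ⟨b,a⟩²/‖a‖₂²) - ⟨a,b⟩⟨x,a⟩/‖a‖₂², where x^⊥ = x - a⟨x,a⟩/‖a‖₂². -/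

import Mathlib

open RealInnerProductSpace

set_option maxHeartbeats 1000000 in
private lemma key_real (P B t q ρ s : ℝ) (hP : 0 ≤ P) (hB : 0 < B) (ht0 : 0 ≤ t)
    (hρ : 0 ≤ ρ) (hfeas : ρ^2 + s^2 ≤ B^2) (hs : s ≤ -t)
    (hcond : q * B < t * Real.sqrt (P^2 + q^2)) :
    -(P * Real.sqrt (B^2 - t^2)) - q * t ≤ -(P * ρ) + q * s := by
  have hsB2 : s^2 ≤ B^2 := by nlinarith [sq_nonneg ρ]
  have hts : t ≤ -s := by linarith
  have ht2 : t^2 ≤ s^2 := by nlinarith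
  have htB : t ≤ B := by nlinarith
  set u := Real.sqrt (B^2 - t^2) with hu_def
  set v := Real.sqrt (B^2 - s^2) with hv_def
  have hu0 : 0 ≤ u := Real.sqrt_nonneg _
  have hv0 : 0 ≤ v := Real.sqrt_nonneg _
  have hu2 : u^2 = B^2 - t^2 := Real.sq_sqrt (by nlinarith)
  have hv2 : v^2 = B^2 - s^2 := Real.sq_sqrt (by nlinarith)
  have hρv : ρ ≤ v := by nlinarith
  have hvu : v ≤ u := Real.sqrt_le_sqrt (by nlinarith)
  have hPρv : -(P*v) ≤ -(P*ρ) := by nlinarith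
  rcases le_or_gt q 0 with hq | hq
  · nlinarith [mul_nonneg hP (sub_nonneg.mpr hvu)]
  · have ht : 0 < t := by
      rcases ht0.lt_or_eq with h | h
      · exact h
      · exfalso; rw [← h] at hcond; nlinarith
    set w := Real.sqrt (P^2 + q^2) with hw_def
    have hX0 : 0 ≤ w := Real.sqrt_nonneg _
    have hX2 : w^2 = P^2 + q^2 := Real.sq_sqrt (by positivity)
    have h1 : q^2*B^2 < t^2*(P^2+q^2) := by
      have h := mul_self_lt_mul_self (le_of_lt (mul_pos hq hB)) hcond
      calc q^2*B^2 = (q*B)*(q*B) := by ring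
        _ < (t*w)*(t*w) := h
        _ = t^2*w^2 := by ring
        _ = t^2*(P^2+q^2) := by rw [hX2]
    have h2 : q*u ≤ t*P := by nlinarith [mul_nonneg (le_of_lt hq) hu0, mul_nonneg ht0 hP]
    have h3 : q*v ≤ q*u := by nlinarith
    rcases eq_or_lt_of_le (show (0:ℝ) ≤ u + v by positivity) with huv | huv
    · have hu0' : u = 0 := by nlinarith
      have hv0' : v = 0 := by nlinarith
      have hsB : s^2 = B^2 := by nlinarith
      have htB' : t = B := by nlinarith
      have hs' : s = -B := by nlinarith
      have hρ0 : ρ = 0 := by nlinarith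
      rw [hu0', hs', hρ0, htB']
      ring_nf
      linarith
    · have hE : 0 ≤ (-s - t) * (P*(-s+t) - q*(u+v)) := by
        apply mul_nonneg (by linarith)
        nlinarith [mul_le_mul_of_nonneg_left hts hP]
      nlinarith [hE, huv]

private lemma lb_aux {n : ℕ} (a b x r : EuclideanSpace ℝ (Fin n))
    (ha : a ≠ 0) (hx : x ≠ 0) (hb : b ≠ 0) (hab : 0 ≤ ⟪a, b⟫)
    (hgt : ⟪b, a⟫ / ‖b‖ > ⟪x, a⟫ / ‖x‖)
    (hc : ⟪a, r + b⟫ ≤ 0) (hn : ‖r‖ ^ 2 ≤ ‖b‖ ^ 2) :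
    -(‖x - (⟪x, a⟫ / ‖a‖ ^ 2) • a‖ * Real.sqrt (‖b‖ ^ 2 - ⟪b, a⟫ ^ 2 / ‖a‖ ^ 2))
      - ⟪a, b⟫ * ⟪x, a⟫ / ‖a‖ ^ 2 ≤ ⟪x, r⟫ := by
  have hA : (0:ℝ) < ‖a‖ := norm_pos_iff.mpr ha
  have hX : (0:ℝ) < ‖x‖ := norm_pos_iff.mpr hx
  have hB : (0:ℝ) < ‖b‖ := norm_pos_iff.mpr hb
  have hA0 : ‖a‖ ≠ 0 := ne_of_gt hA
  set xp := x - (⟪x, a⟫ / ‖a‖ ^ 2) • a with hxp_def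
  set rp := r - (⟪a, r⟫ / ‖a‖ ^ 2) • a with hrp_def
  have hba : ⟪b, a⟫ = ⟪a, b⟫ := real_inner_comm a b
  have hax : ⟪a, x⟫ = ⟪x, a⟫ := real_inner_comm x a
  have hra : ⟪r, a⟫ = ⟪a, r⟫ := real_inner_comm a r
  have haa : ⟪a, a⟫ = ‖a‖^2 := real_inner_self_eq_norm_sq a
  have hP2 : ‖xp‖^2 = ‖x‖^2 - ⟪x,a⟫^2/‖a‖^2 := by
    rw [hxp_def, norm_sub_sq_real, real_inner_smul_right, norm_smul, Real.norm_eq_abs,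
      mul_pow, sq_abs]
    field_simp
    ring
  have hR2 : ‖rp‖^2 = ‖r‖^2 - ⟪a,r⟫^2/‖a‖^2 := by
    rw [hrp_def, norm_sub_sq_real, real_inner_smul_right, norm_smul, Real.norm_eq_abs,
      mul_pow, sq_abs, hra]
    field_simp
    ring
  have hdec : ⟪x, r⟫ = ⟪xp, rp⟫ + ⟪x,a⟫ * ⟪a,r⟫ / ‖a‖^2 := by
    rw [hxp_def, hrp_def, inner_sub_left, inner_sub_right, inner_sub_right,
      real_inner_smul_left, real_inner_smul_right, real_inner_smul_left,
      real_inner_smul_right, haa]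
    field_simp
    ring
  have hCS : -(‖xp‖ * ‖rp‖) ≤ ⟪xp, rp⟫ := neg_le_of_abs_le (abs_real_inner_le_norm xp rp)
  have hs : ⟪a,r⟫/‖a‖ ≤ -(⟪a,b⟫/‖a‖) := by
    rw [inner_add_right] at hc
    rw [← neg_div]
    gcongr
    · linarith
  have hfeas : ‖rp‖^2 + (⟪a,r⟫/‖a‖)^2 ≤ ‖b‖^2 := by
    rw [div_pow]
    linarith [hR2, hn]
  have hsum : ‖xp‖^2 + (⟪x,a⟫/‖a‖)^2 = ‖x‖^2 := by
    rw [div_pow]; linarith [hP2]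
  have hcond : (⟪x,a⟫/‖a‖) * ‖b‖ < (⟪a,b⟫/‖a‖) * Real.sqrt (‖xp‖^2 + (⟪x,a⟫/‖a‖)^2) := by
    rw [hsum, Real.sqrt_sq hX.le]
    have h' : ⟪x,a⟫ * ‖b‖ < ⟪b,a⟫ * ‖x‖ := (div_lt_div_iff₀ hX hB).mp hgt
    rw [hba] at h'
    rw [div_mul_eq_mul_div, div_mul_eq_mul_div, div_lt_div_iff₀ hA hA]
    nlinarith [h', hA]
  have key := key_real ‖xp‖ ‖b‖ (⟪a,b⟫/‖a‖) (⟪x,a⟫/‖a‖) ‖rp‖ (⟪a,r⟫/‖a‖)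
    (norm_nonneg xp) hB (div_nonneg hab hA.le) (norm_nonneg rp) hfeas hs hcond
  have hteq : ‖b‖^2 - (⟪a,b⟫/‖a‖)^2 = ‖b‖^2 - ⟪b,a⟫^2/‖a‖^2 := by
    rw [div_pow, hba]
  rw [hteq] at key
  have e1 : (⟪x,a⟫/‖a‖)*(⟪a,b⟫/‖a‖) = ⟪a,b⟫*⟪x,a⟫/‖a‖^2 := by
    rw [div_mul_div_comm, ← sq, mul_comm (⟪x,a⟫) (⟪a,b⟫)]
  have e2 : (⟪x,a⟫/‖a‖)*(⟪a,r⟫/‖a‖) = ⟪x,a⟫*⟪a,r⟫/‖a‖^2 := by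
    rw [div_mul_div_comm, ← sq]
  linarith [key, hCS, hdec, e1, e2]

set_option maxHeartbeats 1000000 in
/-- Theorem 2 (closed form for the linear minimization over halfspace ∩ ball):
for `x ≠ 0`, `b ≠ 0`, `⟪a, b⟫ ≥ 0`, the minimum of `⟪x, r⟫` over
`{r : ⟪a, r + b⟫ ≤ 0, ‖r‖² ≤ ‖b‖²}` is `-‖x‖‖b‖` when `a = 0` or
`⟪b,a⟫/‖b‖ ≤ ⟪x,a⟫/‖x‖`, and otherwise equals
`-‖x^⊥‖ √(‖b‖² - ⟪b,a⟫²/‖a‖²) - ⟪a,b⟫⟪x,a⟫/‖a‖²` with `x^⊥ = x - (⟪x,a⟫/‖a‖²) • a`. -/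
theorem stmt_10 {n : ℕ} (a b x : EuclideanSpace ℝ (Fin n))
    (hx : x ≠ 0) (hb : b ≠ 0) (hab : ⟪a, b⟫ ≥ 0) :
    ((a = 0 ∨ (a ≠ 0 ∧ ⟪b, a⟫ / ‖b‖ ≤ ⟪x, a⟫ / ‖x‖)) →
      IsLeast {v : ℝ | ∃ r : EuclideanSpace ℝ (Fin n),
          ⟪a, r + b⟫ ≤ 0 ∧ ‖r‖ ^ 2 ≤ ‖b‖ ^ 2 ∧ v = ⟪x, r⟫}
        (-(‖x‖ * ‖b‖))) ∧
    ((a ≠ 0 ∧ ⟪b, a⟫ / ‖b‖ > ⟪x, a⟫ / ‖x‖) →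
      IsLeast {v : ℝ | ∃ r : EuclideanSpace ℝ (Fin n),
          ⟪a, r + b⟫ ≤ 0 ∧ ‖r‖ ^ 2 ≤ ‖b‖ ^ 2 ∧ v = ⟪x, r⟫}
        (-(‖x - (⟪x, a⟫ / ‖a‖ ^ 2) • a‖ * Real.sqrt (‖b‖ ^ 2 - ⟪b, a⟫ ^ 2 / ‖a‖ ^ 2))
          - ⟪a, b⟫ * ⟪x, a⟫ / ‖a‖ ^ 2)) := by
  have hX : (0:ℝ) < ‖x‖ := norm_pos_iff.mpr hx
  have hB : (0:ℝ) < ‖b‖ := norm_pos_iff.mpr hb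
  constructor
  · intro hcase
    constructor
    · refine ⟨(-(‖b‖/‖x‖)) • x, ?_, ?_, ?_⟩
      · rw [inner_add_right, real_inner_smul_right]
        rcases hcase with h0 | ⟨ha, hle⟩
        · simp [h0]
        · have h1 : ⟪b,a⟫ * ‖x‖ ≤ ⟪x,a⟫ * ‖b‖ := (div_le_div_iff₀ hB hX).mp hle
          rw [real_inner_comm a b] at h1
          rw [real_inner_comm x a]
          have h2 : ⟪a,b⟫ ≤ (‖b‖/‖x‖) * ⟪x,a⟫ := by
            rw [div_mul_eq_mul_div, le_div_iff₀ hX]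
            linarith
          linarith
      · have hnr : ‖(-(‖b‖/‖x‖)) • x‖ = ‖b‖ := by
          rw [norm_smul, Real.norm_eq_abs, abs_neg, abs_of_nonneg (by positivity),
            div_mul_cancel₀ _ (ne_of_gt hX)]
        rw [hnr]
      · rw [real_inner_smul_right, real_inner_self_eq_norm_sq]
        field_simp
    · rintro v ⟨r, hc, hn, rfl⟩
      have h1 : -(‖x‖*‖r‖) ≤ ⟪x,r⟫ := neg_le_of_abs_le (abs_real_inner_le_norm x r)
      have h2 : ‖r‖ ≤ ‖b‖ := by nlinarith [norm_nonneg r, norm_nonneg b]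
      nlinarith [mul_le_mul_of_nonneg_left h2 (norm_nonneg x)]
  · rintro ⟨ha, hgt⟩
    have hA : (0:ℝ) < ‖a‖ := norm_pos_iff.mpr ha
    have hA0 : ‖a‖ ≠ 0 := ne_of_gt hA
    have haa : ⟪a,a⟫ = ‖a‖^2 := real_inner_self_eq_norm_sq a
    have hba : ⟪b,a⟫ = ⟪a,b⟫ := real_inner_comm a b
    have hCSab : ⟪a,b⟫ ≤ ‖a‖*‖b‖ := real_inner_le_norm a b
    have hS_nonneg : (0:ℝ) ≤ ‖b‖^2 - ⟪b,a⟫^2/‖a‖^2 := by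
      rw [hba]
      have h1 : ⟪a,b⟫^2 ≤ ‖a‖^2*‖b‖^2 := by nlinarith
      have h2 : ⟪a,b⟫^2/‖a‖^2 ≤ ‖b‖^2 := by
        rw [div_le_iff₀ (by positivity)]
        nlinarith
      linarith
    set S := Real.sqrt (‖b‖^2 - ⟪b,a⟫^2/‖a‖^2) with hS_def
    have hS0 : 0 ≤ S := Real.sqrt_nonneg _
    have hS2 : S^2 = ‖b‖^2 - ⟪b,a⟫^2/‖a‖^2 := Real.sq_sqrt hS_nonneg
    constructor
    · by_cases hxp0 : x - (⟪x,a⟫/‖a‖^2) • a = 0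
      · refine ⟨(-(⟪a,b⟫/‖a‖^2)) • a, ?_, ?_, ?_⟩
        · rw [inner_add_right, real_inner_smul_right, haa]
          have : -(⟪a,b⟫/‖a‖^2)*‖a‖^2 = -⟪a,b⟫ := by field_simp
          linarith
        · rw [norm_smul, Real.norm_eq_abs, abs_neg,
            abs_of_nonneg (div_nonneg hab (by positivity)), mul_pow, div_pow]
          have h1 : ⟪a,b⟫^2/(‖a‖^2)^2*‖a‖^2 = ⟪a,b⟫^2/‖a‖^2 := by
            field_simp
          rw [h1, div_le_iff₀ (by positivity : (0:ℝ) < ‖a‖^2)]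
          nlinarith
        · rw [hxp0, norm_zero, zero_mul, real_inner_smul_right]
          ring
      · set xp := x - (⟪x,a⟫/‖a‖^2) • a with hxp_def
        have hP : (0:ℝ) < ‖xp‖ := norm_pos_iff.mpr hxp0
        have hP0 : ‖xp‖ ≠ 0 := ne_of_gt hP
        have haxp : ⟪a, xp⟫ = 0 := by
          rw [hxp_def, inner_sub_right, real_inner_smul_right, haa, real_inner_comm x a]
          field_simp
          ring
        have hxpa : ⟪xp, a⟫ = 0 := by rw [real_inner_comm a xp]; exact haxp
        have hxxp : ⟪x, xp⟫ = ‖xp‖^2 := by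
          have h1 : ⟪xp, xp⟫ = ⟪x, xp⟫ - (⟪x,a⟫/‖a‖^2) * ⟪a, xp⟫ := by
            nth_rewrite 1 [hxp_def]
            rw [inner_sub_left, real_inner_smul_left]
          rw [haxp, mul_zero, sub_zero] at h1
          rw [← h1, real_inner_self_eq_norm_sq]
        refine ⟨(-(S/‖xp‖)) • xp + (-(⟪a,b⟫/‖a‖^2)) • a, ?_, ?_, ?_⟩
        · rw [inner_add_right, inner_add_right, real_inner_smul_right,
            real_inner_smul_right, haxp, haa, mul_zero]
          have : -(⟪a,b⟫/‖a‖^2)*‖a‖^2 = -⟪a,b⟫ := by field_simp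
          linarith
        · rw [norm_add_sq_real, real_inner_smul_left, real_inner_smul_right, hxpa,
            mul_zero, mul_zero, norm_smul, norm_smul, Real.norm_eq_abs, Real.norm_eq_abs,
            abs_neg, abs_neg, abs_of_nonneg (div_nonneg hS0 hP.le),
            abs_of_nonneg (div_nonneg hab (by positivity)), mul_pow, mul_pow, div_pow, div_pow]
          have h1 : S^2/‖xp‖^2*‖xp‖^2 = S^2 := by field_simp
          have h2 : ⟪a,b⟫^2/(‖a‖^2)^2*‖a‖^2 = ⟪a,b⟫^2/‖a‖^2 := by field_simp
          rw [h1, h2, hS2, hba]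
          ring_nf
          linarith
        · rw [inner_add_right, real_inner_smul_right, real_inner_smul_right, hxxp]
          field_simp
          ring
    · rintro v ⟨r, hc, hn, rfl⟩
      exact lb_aux a b x r ha hx hb hab hgt hc hn
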